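/- Let N be a finite player set and (ω,Σ) a weight system on N. Let P_{ω,Σ} be the probability distribution on linear orders (bijective sequences) L of N defined recursively by: the first element of L equals i with probability ω̄^N_i/ω̄^N, and conditionally on the first element being i, the remaining order is distributed according to the analogous distribution for the weight system restricted to N∖{i}. Then for every TU-game (N,v) and every player i, the expectation under P_{ω,Σ} of v({j : L(j) ≥ L(i)}) − v({j : L(j) > L(i)}) equals the (ω,Σ)-weighted Shapley value Φ^ω_i(v) (here L(j) denotes the position of j in the order, with earlier positions smaller). -/

import Mathlib

open Finset

variable {α : Type*}

noncomputable section

/-- `ω̄^S_i`: the weight of `i` if `i` belongs to the top-priority part `S̄` of `S`, else `0`.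
Here the ordered partition `Σ` is encoded by the priority function `p`. -/
def wbar [DecidableEq α] (ω : α → ℝ) (p : α → ℕ) (S : Finset α) (i : α) : ℝ :=
  if i ∈ S ∧ p i = S.sup p then ω i else 0

/-- `ω̄^S = ∑_{i ∈ S̄} ω_i`. -/
def wbarSum [DecidableEq α] (ω : α → ℝ) (p : α → ℕ) (S : Finset α) : ℝ :=
  ∑ i ∈ S, wbar ω p S i

/-- unanimity coefficients `λ_S(v)` (Harsanyi dividends). -/
def unanimityCoeff [DecidableEq α] (v : Finset α → ℝ) (S : Finset α) : ℝ :=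
  ∑ T ∈ S.powerset, (-1 : ℝ) ^ (S.card - T.card) * v T

/-- `(ω,Σ)`-weighted Shapley value of player `i` for the game `v` with ground coalition `M`
(note that `wbar ω p S i = 0` unless `i ∈ S̄`). -/
def wShapley [DecidableEq α] (ω : α → ℝ) (p : α → ℕ) (v : Finset α → ℝ)
    (M : Finset α) (i : α) : ℝ :=
  ∑ S ∈ M.powerset, wbar ω p S i / wbarSum ω p S * unanimityCoeff v S

/-- The probability `P_{ω,Σ}(σ)` of a linear order `σ` (where `σ j` is the position of `j`,
earlier positions smaller): at each stage `t` the next player `σ.symm t` is drawn from the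
remaining set `{j : σ j ≥ t}` with probability proportional to the weights of the weight system
restricted to this remaining set; this is exactly the recursive definition of `P_{ω,Σ}`. -/
def orderProb [Fintype α] [DecidableEq α] (ω : α → ℝ) (p : α → ℕ)
    (σ : α ≃ Fin (Fintype.card α)) : ℝ :=
  ∏ t : Fin (Fintype.card α),
    wbar ω p (Finset.univ.filter fun j => t ≤ σ j) (σ.symm t) /
      wbarSum ω p (Finset.univ.filter fun j => t ≤ σ j)



section AuxLemmas

variable {β : Type*} [DecidableEq β]

theorem wbar_nonneg (ω : β → ℝ) (hω : ∀ i, 0 < ω i) (p : β → ℕ) (S : Finset β) (i : β) :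
    0 ≤ wbar ω p S i := by
  unfold wbar; split
  · exact (hω i).le
  · rfl

theorem wbar_of_not_mem {ω : β → ℝ} {p : β → ℕ} {S : Finset β} {i : β} (h : i ∉ S) :
    wbar ω p S i = 0 := by
  unfold wbar
  rw [if_neg (by tauto)]

theorem wbarSum_pos (ω : β → ℝ) (hω : ∀ i, 0 < ω i) (p : β → ℕ) {S : Finset β}
    (hS : S.Nonempty) : 0 < wbarSum ω p S := by
  obtain ⟨i, hi, hsup⟩ := Finset.exists_mem_eq_sup S hS p
  refine Finset.sum_pos' (fun j _ => wbar_nonneg ω hω p S j) ⟨i, hi, ?_⟩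
  unfold wbar
  rw [if_pos ⟨hi, hsup.symm⟩]
  exact hω i

/-- Möbius inversion for unanimity coefficients. -/
theorem sum_unanimityCoeff (v : Finset β → ℝ) (T : Finset β) :
    ∑ S ∈ T.powerset, unanimityCoeff v S = v T := by
  unfold unanimityCoeff
  rw [Finset.sum_comm' (t' := T.powerset)
    (s' := fun U => T.powerset.filter fun S => U ⊆ S)
    (by
      intro S U
      simp only [mem_powerset, mem_filter]
      constructor
      · rintro ⟨h1, h2⟩; exact ⟨⟨h1, h2⟩, h2.trans h1⟩
      · rintro ⟨⟨h1, h2⟩, _⟩; exact ⟨h1, h2⟩)]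
  have h1 : ∀ U ∈ T.powerset,
      (∑ S ∈ T.powerset.filter (fun S => U ⊆ S), (-1:ℝ) ^ (S.card - U.card) * v U)
        = if U = T then v T else 0 := by
    intro U hU
    rw [mem_powerset] at hU
    have himg : T.powerset.filter (fun S => U ⊆ S)
        = (T \ U).powerset.image (fun R => U ∪ R) := by
      ext S
      simp only [mem_filter, mem_powerset, mem_image]
      constructor
      · rintro ⟨hST, hUS⟩
        exact ⟨S \ U, sdiff_subset_sdiff hST le_rfl, Finset.union_sdiff_of_subset hUS⟩
      · rintro ⟨R, hR, rfl⟩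
        exact ⟨Finset.union_subset hU (hR.trans (Finset.sdiff_subset)), Finset.subset_union_left⟩
    have hinj : ∀ R₁ ∈ (T \ U).powerset, ∀ R₂ ∈ (T \ U).powerset,
        U ∪ R₁ = U ∪ R₂ → R₁ = R₂ := by
      intro R₁ h₁ R₂ h₂ h
      rw [mem_powerset] at h₁ h₂
      have d₁ : Disjoint U R₁ := (Finset.disjoint_sdiff).mono_right h₁
      have d₂ : Disjoint U R₂ := (Finset.disjoint_sdiff).mono_right h₂
      rw [← Finset.union_sdiff_cancel_left d₁, h, Finset.union_sdiff_cancel_left d₂]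
    rw [himg, Finset.sum_image hinj]
    have hcard : ∀ R ∈ (T \ U).powerset, (U ∪ R).card - U.card = R.card := by
      intro R hR
      rw [mem_powerset] at hR
      have d : Disjoint U R := (Finset.disjoint_sdiff).mono_right hR
      rw [Finset.card_union_of_disjoint d]
      omega
    rw [Finset.sum_congr rfl fun R hR => by rw [hcard R hR]]
    rw [← Finset.sum_mul]
    have : (∑ R ∈ (T \ U).powerset, (-1:ℝ) ^ R.card)
        = if T \ U = ∅ then 1 else 0 := by
      have := @Finset.sum_powerset_neg_one_pow_card β _ (T \ U)
      have h2 : ((∑ m ∈ (T \ U).powerset, (-1:ℤ) ^ m.card : ℤ) : ℝ)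
          = ∑ R ∈ (T \ U).powerset, (-1:ℝ) ^ R.card := by push_cast; rfl
      rw [← h2, this]
      split <;> norm_num
    rw [this]
    by_cases h : U = T
    · subst h
      rw [if_pos (Finset.sdiff_eq_empty_iff_subset.mpr le_rfl), if_pos rfl, one_mul]
    · rw [if_neg (fun he => h (le_antisymm hU (Finset.sdiff_eq_empty_iff_subset.mp he))),
        if_neg h, zero_mul]
  rw [Finset.sum_congr rfl h1, Finset.sum_ite_eq' T.powerset T (fun _ => v T)]
  simp


theorem sum_unanimityCoeff_mem (v : Finset β → ℝ) (N : Finset β) (i : β) :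
    ∑ S ∈ N.powerset.filter (fun S => i ∈ S), unanimityCoeff v S
      = v N - v (N.erase i) := by
  have hsplit := Finset.sum_filter_add_sum_filter_not N.powerset (fun S => i ∈ S)
    (unanimityCoeff v)
  have hne : N.powerset.filter (fun S => ¬ i ∈ S) = (N.erase i).powerset := by
    ext S
    simp [mem_filter, mem_powerset, Finset.subset_erase]
  have h1 := sum_unanimityCoeff v N
  have h2 := sum_unanimityCoeff v (N.erase i)
  rw [hne, h2] at hsplit
  linarith [hsplit, h1]


end AuxLemmas

section Glue
variable {β : Type*} [DecidableEq β] {n : ℕ}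

def predNe (n : ℕ) : {y : Fin (n+1) // y ≠ 0} ≃ Fin n where
  toFun y := y.1.pred y.2
  invFun i := ⟨i.succ, Fin.succ_ne_zero i⟩
  left_inv y := by
    ext
    simp [Fin.succ_pred]
  right_inv i := by simp [Fin.pred_succ]

def glue (a : β) (τ : {x : β // x ≠ a} ≃ Fin n) : β ≃ Fin (n+1) :=
  ((Equiv.optionSubtypeNe a).symm.trans τ.optionCongr).trans (finSuccEquiv n).symm

theorem glue_self (a : β) (τ : {x : β // x ≠ a} ≃ Fin n) : glue a τ a = 0 := by
  simp [glue, Equiv.optionSubtypeNe_symm_self]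

theorem glue_ne (a : β) (τ : {x : β // x ≠ a} ≃ Fin n) {x : β} (h : x ≠ a) :
    glue a τ x = (τ ⟨x, h⟩).succ := by
  simp [glue, Equiv.optionSubtypeNe_symm_of_ne h, finSuccEquiv_symm_some]

theorem glue_symm_zero (a : β) (τ : {x : β // x ≠ a} ≃ Fin n) : (glue a τ).symm 0 = a := by
  rw [Equiv.symm_apply_eq, glue_self]

theorem glue_symm_succ (a : β) (τ : {x : β // x ≠ a} ≃ Fin n) (s : Fin n) :
    (glue a τ).symm s.succ = (τ.symm s).1 := by
  rw [Equiv.symm_apply_eq, glue_ne a τ (τ.symm s).2]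
  simp

def unglue (a : β) (σ : β ≃ Fin (n+1)) (h : σ.symm 0 = a) : {x : β // x ≠ a} ≃ Fin n :=
  (σ.subtypeEquiv (fun x => not_congr (by rw [← h, Equiv.eq_symm_apply]))).trans (predNe n)

def peelEquiv (a : β) : {σ : β ≃ Fin (n+1) // σ.symm 0 = a} ≃ ({x : β // x ≠ a} ≃ Fin n) where
  toFun σp := unglue a σp.1 σp.2
  invFun τ := ⟨glue a τ, glue_symm_zero a τ⟩
  left_inv := by
    rintro ⟨σ, h⟩
    refine Subtype.ext (Equiv.ext fun x => ?_)
    by_cases hx : x = a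
    · subst hx
      rw [glue_self]
      exact ((congrArg σ h.symm).trans (σ.apply_symm_apply 0)).symm
    · rw [glue_ne a _ hx]
      simp [unglue, predNe, Fin.succ_pred]
  right_inv τ := by
    refine Equiv.ext fun x => ?_
    have := glue_ne a τ x.2
    simp [unglue, predNe, this, Fin.pred_succ]

theorem sum_peel [Fintype β] (F : (β ≃ Fin (n+1)) → ℝ) :
    ∑ σ : β ≃ Fin (n+1), F σ
      = ∑ a : β, ∑ τ : {x : β // x ≠ a} ≃ Fin n, F (glue a τ) := by
  classical
  rw [← Fintype.sum_fiberwise (fun σ : β ≃ Fin (n+1) => σ.symm 0) F]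
  refine Finset.sum_congr rfl fun a _ => ?_
  exact (Equiv.sum_comp (peelEquiv a).symm
    (fun σp : {σ : β ≃ Fin (n+1) // σ.symm 0 = a} => F σp.1)).symm

end Glue

section MapSec
variable {β : Type*} [DecidableEq β] (a : β)

abbrev subEmb : {x : β // x ≠ a} ↪ β := Function.Embedding.subtype _

theorem wbar_map (ω : β → ℝ) (p : β → ℕ) (S : Finset {x : β // x ≠ a}) (x : {x : β // x ≠ a}) :
    wbar (fun y => ω y.1) (fun y => p y.1) S x = wbar ω p (S.map (subEmb a)) x.1 := by
  unfold wbar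
  have hsup : (S.map (subEmb a)).sup p = S.sup (fun y => p y.1) := Finset.sup_map S _ p
  rw [hsup]
  have hmem : x ∈ S ↔ x.1 ∈ S.map (subEmb a) := (Finset.mem_map' _).symm
  simp only [hmem]
theorem wbarSum_map (ω : β → ℝ) (p : β → ℕ) (S : Finset {x : β // x ≠ a}) :
    wbarSum (fun y => ω y.1) (fun y => p y.1) S = wbarSum ω p (S.map (subEmb a)) := by
  unfold wbarSum
  rw [Finset.sum_map]
  exact Finset.sum_congr rfl fun x _ => wbar_map a ω p S x

theorem powerset_map_eq (S : Finset {x : β // x ≠ a}) :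
    (S.map (subEmb a)).powerset = S.powerset.image (fun u => u.map (subEmb a)) := by
  ext t
  simp only [mem_powerset, mem_image]
  constructor
  · intro ht
    obtain ⟨u, hu, rfl⟩ := Finset.subset_map_iff.mp ht
    exact ⟨u, hu, rfl⟩
  · rintro ⟨u, hu, rfl⟩
    exact Finset.map_subset_map.mpr hu

theorem unanimityCoeff_map (v : Finset β → ℝ) (T : Finset {x : β // x ≠ a}) :
    unanimityCoeff (fun U => v (U.map (subEmb a))) T = unanimityCoeff v (T.map (subEmb a)) := by
  unfold unanimityCoeff
  rw [powerset_map_eq, Finset.sum_image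
    (fun u _ u' _ h => Finset.map_injective (subEmb a) h)]
  refine Finset.sum_congr rfl fun U _ => ?_
  rw [Finset.card_map, Finset.card_map]

theorem wShapley_map [Fintype β] (ω : β → ℝ) (p : β → ℕ) (v : Finset β → ℝ) (i : {x : β // x ≠ a}) :
    wShapley (fun y => ω y.1) (fun y => p y.1) (fun U => v (U.map (subEmb a))) Finset.univ i
      = ∑ S ∈ (Finset.univ.erase a).powerset,
          wbar ω p S i.1 / wbarSum ω p S * unanimityCoeff v S := by
  classical
  have huniv : (Finset.univ : Finset {x : β // x ≠ a}).map (subEmb a) = Finset.univ.erase a := by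
    ext x
    simp only [Finset.mem_map, Finset.mem_erase, Finset.mem_univ, and_true]
    constructor
    · rintro ⟨y, -, rfl⟩; exact y.2
    · intro hx; exact ⟨⟨x, hx⟩, trivial, rfl⟩
  rw [← huniv, powerset_map_eq, Finset.sum_image
    (fun u _ u' _ h => Finset.map_injective (subEmb a) h)]
  unfold wShapley
  refine Finset.sum_congr rfl fun U _ => ?_
  rw [wbar_map, wbarSum_map, unanimityCoeff_map]
end MapSec

section Star
variable {β : Type*} [Fintype β] [DecidableEq β]

theorem star_identity (ω : β → ℝ) (hω : ∀ i, 0 < ω i) (p : β → ℕ) (i : β) (S : Finset β) :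
    wbar ω p S i / wbarSum ω p S * (∑ a ∈ S, wbar ω p Finset.univ a)
      = if i ∈ S then wbar ω p Finset.univ i else 0 := by
  by_cases hiS : i ∈ S
  · rw [if_pos hiS]
    by_cases htop : p i = Finset.univ.sup p
    · have hle : S.sup p ≤ Finset.univ.sup p := Finset.sup_mono (Finset.subset_univ S)
      have hsup : S.sup p = Finset.univ.sup p :=
        le_antisymm hle (htop ▸ Finset.le_sup hiS)
      have hsum : ∑ a ∈ S, wbar ω p Finset.univ a = wbarSum ω p S := by
        unfold wbarSum wbar
        refine Finset.sum_congr rfl fun b hb => ?_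
        rw [hsup]
        simp [hb]
      rw [hsum, div_mul_cancel₀ _ (wbarSum_pos ω hω p ⟨i, hiS⟩).ne']
      unfold wbar
      rw [if_pos ⟨hiS, hsup ▸ htop⟩, if_pos ⟨Finset.mem_univ i, htop⟩]
    · rw [show wbar ω p Finset.univ i = 0 from by unfold wbar; rw [if_neg (by tauto)]]
      by_cases hpi : p i = S.sup p
      · have hz : ∀ b ∈ S, wbar ω p Finset.univ b = 0 := by
          intro b hb
          unfold wbar
          rw [if_neg]
          rintro ⟨-, hpb⟩
          have h1 : p b ≤ S.sup p := Finset.le_sup hb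
          have h2 : S.sup p ≤ Finset.univ.sup p := Finset.sup_mono (Finset.subset_univ S)
          omega
        rw [Finset.sum_eq_zero hz, mul_zero]
      · rw [show wbar ω p S i = 0 from by unfold wbar; rw [if_neg (by tauto)], zero_div,
          zero_mul]
  · rw [if_neg hiS, wbar_of_not_mem hiS, zero_div, zero_mul]
end Star

section Prob
variable {β : Type*} [Fintype β] [DecidableEq β]

def oprob (ω : β → ℝ) (p : β → ℕ) {n : ℕ} (σ : β ≃ Fin n) : ℝ :=
  ∏ t : Fin n,
    wbar ω p (Finset.univ.filter fun j => t ≤ σ j) (σ.symm t) /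
      wbarSum ω p (Finset.univ.filter fun j => t ≤ σ j)

theorem oprob_glue (ω : β → ℝ) (p : β → ℕ) {n : ℕ} (a : β) (τ : {x : β // x ≠ a} ≃ Fin n) :
    oprob ω p (glue a τ)
      = wbar ω p Finset.univ a / wbarSum ω p Finset.univ
          * oprob (fun y => ω y.1) (fun y => p y.1) τ := by
  unfold oprob
  rw [Fin.prod_univ_succ]
  congr 1
  · have h0 : (Finset.univ.filter fun j => (0 : Fin (n+1)) ≤ glue a τ j) = Finset.univ :=
      Finset.filter_true_of_mem fun _ _ => Fin.zero_le _
    rw [h0, glue_symm_zero]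
  · refine Finset.prod_congr rfl fun s _ => ?_
    have hset : (Finset.univ.filter fun j => (s.succ : Fin (n+1)) ≤ glue a τ j)
        = (Finset.univ.filter fun j : {x : β // x ≠ a} => s ≤ τ j).map (subEmb a) := by
      ext x
      simp only [Finset.mem_filter, Finset.mem_univ, true_and, Finset.mem_map]
      constructor
      · intro hx
        have hxa : x ≠ a := by
          rintro rfl
          rw [glue_self] at hx
          exact absurd hx (by simp [Fin.le_def])
        refine ⟨⟨x, hxa⟩, ?_, rfl⟩
        rw [glue_ne a τ hxa] at hx
        simpa [Finset.mem_filter] using Fin.succ_le_succ_iff.mp hx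
      · rintro ⟨⟨x, hxa⟩, hs, rfl⟩
        show s.succ ≤ glue a τ x
        rw [glue_ne a τ hxa]
        exact Fin.succ_le_succ_iff.mpr (by simpa [Finset.mem_filter] using hs)
    rw [hset, glue_symm_succ, ← wbar_map, ← wbarSum_map]

theorem sum_oprob : ∀ (n : ℕ) (β : Type*) [Fintype β] [DecidableEq β],
    Fintype.card β = n → ∀ (ω : β → ℝ), (∀ i, 0 < ω i) → ∀ (p : β → ℕ),
    ∑ σ : β ≃ Fin n, oprob ω p σ = 1 := by
  intro n
  induction n with
  | zero =>
    intro β _ _ hcard ω hω p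
    have he : β ≃ Fin 0 := Fintype.equivFinOfCardEq hcard
    have h1 : ∀ σ : β ≃ Fin 0, oprob ω p σ = 1 := fun σ => by
      unfold oprob; exact Finset.prod_of_isEmpty _
    rw [Finset.sum_congr rfl fun σ _ => h1 σ, Finset.sum_const, Finset.card_univ,
      Fintype.card_equiv he, hcard]
    simp
  | succ n IH =>
    intro β _ _ hcard ω hω p
    rw [sum_peel]
    have hne : (Finset.univ : Finset β).Nonempty := by
      rw [← Finset.card_pos, Finset.card_univ, hcard]; omega
    have hW := (wbarSum_pos ω hω p hne).ne'
    have hsub : ∀ a : β, Fintype.card {x : β // x ≠ a} = n := by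
      intro a
      have h := Fintype.card_subtype_compl (fun x : β => x = a)
      rw [Fintype.card_subtype_eq, hcard] at h
      simpa using h
    have hinner : ∀ a : β, ∑ τ : {x : β // x ≠ a} ≃ Fin n, oprob ω p (glue a τ)
        = wbar ω p Finset.univ a / wbarSum ω p Finset.univ := by
      intro a
      rw [Finset.sum_congr rfl fun τ _ => oprob_glue ω p a τ, ← Finset.mul_sum,
        IH _ (hsub a) _ (fun x => hω x.1) _, mul_one]
    rw [Finset.sum_congr rfl fun a _ => hinner a, ← Finset.sum_div]
    exact div_self hW
end Prob

section Key
variable {β : Type*} [Fintype β] [DecidableEq β]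

theorem powerset_filter_not_mem (N : Finset β) (a : β) :
    N.powerset.filter (fun S => ¬ a ∈ S) = (N.erase a).powerset := by
  ext S
  simp [Finset.mem_powerset, Finset.subset_erase]

theorem card_ne (a : β) {n : ℕ} (hcard : Fintype.card β = n + 1) :
    Fintype.card {x : β // x ≠ a} = n := by
  have h := Fintype.card_subtype_compl (fun x : β => x = a)
  rw [Fintype.card_subtype_eq, hcard] at h
  simpa using h

theorem filter_succ_le {n : ℕ} (a : β) (τ : {x : β // x ≠ a} ≃ Fin n) (s : Fin n) :
    (Finset.univ.filter fun j => (s.succ : Fin (n+1)) ≤ glue a τ j)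
      = (Finset.univ.filter fun j : {x : β // x ≠ a} => s ≤ τ j).map (subEmb a) := by
  ext x
  simp only [Finset.mem_filter, Finset.mem_univ, true_and, Finset.mem_map]
  constructor
  · intro hx
    have hxa : x ≠ a := by
      rintro rfl
      rw [glue_self] at hx
      exact absurd hx (by simp [Fin.le_def])
    refine ⟨⟨x, hxa⟩, ?_, rfl⟩
    rw [glue_ne a τ hxa] at hx
    simpa [Finset.mem_filter] using Fin.succ_le_succ_iff.mp hx
  · rintro ⟨⟨x, hxa⟩, hs, rfl⟩
    show s.succ ≤ glue a τ x
    rw [glue_ne a τ hxa]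
    exact Fin.succ_le_succ_iff.mpr (by simpa [Finset.mem_filter] using hs)

theorem filter_succ_lt {n : ℕ} (a : β) (τ : {x : β // x ≠ a} ≃ Fin n) (s : Fin n) :
    (Finset.univ.filter fun j => (s.succ : Fin (n+1)) < glue a τ j)
      = (Finset.univ.filter fun j : {x : β // x ≠ a} => s < τ j).map (subEmb a) := by
  ext x
  simp only [Finset.mem_filter, Finset.mem_univ, true_and, Finset.mem_map]
  constructor
  · intro hx
    have hxa : x ≠ a := by
      rintro rfl
      rw [glue_self] at hx
      exact absurd hx (by simp [Fin.lt_def])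
    refine ⟨⟨x, hxa⟩, ?_, rfl⟩
    rw [glue_ne a τ hxa] at hx
    simpa [Finset.mem_filter] using Fin.succ_lt_succ_iff.mp hx
  · rintro ⟨⟨x, hxa⟩, hs, rfl⟩
    show s.succ < glue a τ x
    rw [glue_ne a τ hxa]
    exact Fin.succ_lt_succ_iff.mpr (by simpa [Finset.mem_filter] using hs)

theorem key_main : ∀ (n : ℕ) (β : Type*) [Fintype β] [DecidableEq β],
    Fintype.card β = n → ∀ (ω : β → ℝ), (∀ i, 0 < ω i) → ∀ (p : β → ℕ)
    (v : Finset β → ℝ), v ∅ = 0 → ∀ i : β,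
    (∑ σ : β ≃ Fin n, oprob ω p σ *
        (v (Finset.univ.filter fun j => σ i ≤ σ j) -
          v (Finset.univ.filter fun j => σ i < σ j)))
      = wShapley ω p v Finset.univ i := by
  intro n
  induction n with
  | zero =>
    intro β _ _ hcard ω hω p v hv i
    have : IsEmpty β := Fintype.card_eq_zero_iff.mp hcard
    exact this.elim i
  | succ n IH =>
    intro β _ _ hcard ω hω p v hv i
    have hne : (Finset.univ : Finset β).Nonempty := ⟨i, Finset.mem_univ i⟩
    have hW : wbarSum ω p (Finset.univ : Finset β) ≠ 0 := (wbarSum_pos ω hω p hne).ne'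
    rw [sum_peel]
    have hinner : ∀ a : β,
        (∑ τ : {x : β // x ≠ a} ≃ Fin n, oprob ω p (glue a τ) *
          (v (Finset.univ.filter fun j => glue a τ i ≤ glue a τ j) -
            v (Finset.univ.filter fun j => glue a τ i < glue a τ j)))
        = wbar ω p Finset.univ a / wbarSum ω p Finset.univ *
            (if i = a then v Finset.univ - v (Finset.univ.erase a)
             else ∑ S ∈ (Finset.univ.erase a).powerset,
                wbar ω p S i / wbarSum ω p S * unanimityCoeff v S) := by
      intro a
      by_cases hia : i = a
      · subst hia
        rw [if_pos rfl]
        have hterm : ∀ τ : {x : β // x ≠ i} ≃ Fin n,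
            oprob ω p (glue i τ) *
              (v (Finset.univ.filter fun j => glue i τ i ≤ glue i τ j) -
                v (Finset.univ.filter fun j => glue i τ i < glue i τ j))
            = wbar ω p Finset.univ i / wbarSum ω p Finset.univ *
                oprob (fun y => ω y.1) (fun y => p y.1) τ *
                (v Finset.univ - v (Finset.univ.erase i)) := by
          intro τ
          have h1 : (Finset.univ.filter fun j => glue i τ i ≤ glue i τ j) = Finset.univ := by
            rw [glue_self]
            exact Finset.filter_true_of_mem fun _ _ => Fin.zero_le _
          have h2 : (Finset.univ.filter fun j => glue i τ i < glue i τ j)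
              = Finset.univ.erase i := by
            rw [glue_self]
            ext x
            simp only [Finset.mem_filter, Finset.mem_univ, true_and, Finset.mem_erase,
              and_true]
            constructor
            · intro h
              rintro rfl
              rw [glue_self] at h
              exact lt_irrefl _ h
            · intro hx
              rw [glue_ne i τ hx]
              exact Fin.succ_pos _
          rw [h1, h2, oprob_glue]
        rw [Finset.sum_congr rfl fun τ _ => hterm τ]
        rw [← Finset.sum_mul, ← Finset.mul_sum,
          sum_oprob n _ (card_ne i hcard) _ (fun y => hω y.1) _, mul_one]
      · rw [if_neg hia]
        have hterm : ∀ τ : {x : β // x ≠ a} ≃ Fin n,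
            oprob ω p (glue a τ) *
              (v (Finset.univ.filter fun j => glue a τ i ≤ glue a τ j) -
                v (Finset.univ.filter fun j => glue a τ i < glue a τ j))
            = wbar ω p Finset.univ a / wbarSum ω p Finset.univ *
                (oprob (fun y => ω y.1) (fun y => p y.1) τ *
                  ((fun U => v (U.map (subEmb a)))
                      (Finset.univ.filter fun j : {x : β // x ≠ a} => τ ⟨i, hia⟩ ≤ τ j) -
                   (fun U => v (U.map (subEmb a)))
                      (Finset.univ.filter fun j : {x : β // x ≠ a} => τ ⟨i, hia⟩ < τ j))) := by
          intro τ
          have h1 : (Finset.univ.filter fun j => glue a τ i ≤ glue a τ j)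
              = (Finset.univ.filter fun j : {x : β // x ≠ a} => τ ⟨i, hia⟩ ≤ τ j).map
                  (subEmb a) := by
            rw [glue_ne a τ hia]
            exact filter_succ_le a τ _
          have h2 : (Finset.univ.filter fun j => glue a τ i < glue a τ j)
              = (Finset.univ.filter fun j : {x : β // x ≠ a} => τ ⟨i, hia⟩ < τ j).map
                  (subEmb a) := by
            rw [glue_ne a τ hia]
            exact filter_succ_lt a τ _
          rw [h1, h2, oprob_glue]
          ring
        rw [Finset.sum_congr rfl fun τ _ => hterm τ, ← Finset.mul_sum]
        rw [IH _ (card_ne a hcard) _ (fun y => hω y.1) (fun y => p y.1)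
          (fun U => v (U.map (subEmb a))) (by simpa using hv) ⟨i, hia⟩]
        rw [wShapley_map]
    rw [Finset.sum_congr rfl fun a _ => hinner a]
    have hA : ∀ a : β,
        (∑ S ∈ (Finset.univ.erase a).powerset,
            wbar ω p S i / wbarSum ω p S * unanimityCoeff v S)
          = wShapley ω p v Finset.univ i
            - ∑ S ∈ Finset.univ.powerset.filter (fun S => a ∈ S),
                wbar ω p S i / wbarSum ω p S * unanimityCoeff v S := by
      intro a
      have h := Finset.sum_filter_add_sum_filter_not (Finset.univ : Finset β).powerset
        (fun S => a ∈ S) (fun S => wbar ω p S i / wbarSum ω p S * unanimityCoeff v S)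
      rw [powerset_filter_not_mem] at h
      unfold wShapley
      linarith [h]
    have hC : wShapley ω p v Finset.univ i
        = ∑ S ∈ Finset.univ.powerset.filter (fun S => i ∈ S),
            wbar ω p S i / wbarSum ω p S * unanimityCoeff v S := by
      have h := Finset.sum_filter_add_sum_filter_not (Finset.univ : Finset β).powerset
        (fun S => i ∈ S) (fun S => wbar ω p S i / wbarSum ω p S * unanimityCoeff v S)
      rw [powerset_filter_not_mem] at h
      have hz : (∑ S ∈ (Finset.univ.erase i).powerset,
          wbar ω p S i / wbarSum ω p S * unanimityCoeff v S) = 0 := by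
        refine Finset.sum_eq_zero fun S hS => ?_
        rw [Finset.mem_powerset, Finset.subset_erase] at hS
        rw [wbar_of_not_mem hS.2, zero_div, zero_mul]
      unfold wShapley
      linarith [h]
    have hB : (∑ a : β, wbar ω p Finset.univ a *
          ∑ S ∈ Finset.univ.powerset.filter (fun S => a ∈ S),
            wbar ω p S i / wbarSum ω p S * unanimityCoeff v S)
        = wbar ω p Finset.univ i * (v Finset.univ - v (Finset.univ.erase i)) := by
      have h1 : ∀ a : β, wbar ω p Finset.univ a *
            (∑ S ∈ Finset.univ.powerset.filter (fun S => a ∈ S),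
              wbar ω p S i / wbarSum ω p S * unanimityCoeff v S)
          = ∑ S ∈ (Finset.univ : Finset β).powerset, (if a ∈ S then
              wbar ω p Finset.univ a * (wbar ω p S i / wbarSum ω p S * unanimityCoeff v S)
            else 0) := by
        intro a
        rw [Finset.sum_filter, Finset.mul_sum]
        refine Finset.sum_congr rfl fun S _ => ?_
        split <;> simp
      rw [Finset.sum_congr rfl fun a _ => h1 a, Finset.sum_comm]
      have h2 : ∀ S ∈ (Finset.univ : Finset β).powerset,
          (∑ a : β, if a ∈ S then
              wbar ω p Finset.univ a * (wbar ω p S i / wbarSum ω p S * unanimityCoeff v S)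
            else 0)
          = (if i ∈ S then wbar ω p Finset.univ i * unanimityCoeff v S else 0) := by
        intro S _
        rw [Finset.sum_ite_mem, Finset.univ_inter, ← Finset.sum_mul]
        rw [show (∑ a ∈ S, wbar ω p Finset.univ a) *
            (wbar ω p S i / wbarSum ω p S * unanimityCoeff v S)
          = wbar ω p S i / wbarSum ω p S * (∑ a ∈ S, wbar ω p Finset.univ a)
              * unanimityCoeff v S from by ring]
        rw [star_identity ω hω p i S]
        split <;> simp
      rw [Finset.sum_congr rfl h2, ← Finset.sum_filter, ← Finset.mul_sum,
        sum_unanimityCoeff_mem]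
    have hsum : ∀ a : β,
        wbar ω p Finset.univ a / wbarSum ω p Finset.univ *
          (if i = a then v Finset.univ - v (Finset.univ.erase a)
           else ∑ S ∈ (Finset.univ.erase a).powerset,
              wbar ω p S i / wbarSum ω p S * unanimityCoeff v S)
        = wbar ω p Finset.univ a / wbarSum ω p Finset.univ *
            (wShapley ω p v Finset.univ i
              - ∑ S ∈ Finset.univ.powerset.filter (fun S => a ∈ S),
                  wbar ω p S i / wbarSum ω p S * unanimityCoeff v S)
          + (if a = i then
              wbar ω p Finset.univ i / wbarSum ω p Finset.univ *
                ((v Finset.univ - v (Finset.univ.erase i))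
                  - (wShapley ω p v Finset.univ i
                      - ∑ S ∈ Finset.univ.powerset.filter (fun S => i ∈ S),
                          wbar ω p S i / wbarSum ω p S * unanimityCoeff v S))
             else 0) := by
      intro a
      by_cases hia : i = a
      · subst hia
        rw [if_pos rfl, if_pos rfl]
        ring
      · rw [if_neg hia, if_neg (fun h => hia h.symm), hA a, add_zero]
    rw [Finset.sum_congr rfl fun a _ => hsum a, Finset.sum_add_distrib,
      Finset.sum_ite_eq' Finset.univ i
        (fun _ => wbar ω p Finset.univ i / wbarSum ω p Finset.univ *
          ((v Finset.univ - v (Finset.univ.erase i))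
            - (wShapley ω p v Finset.univ i
                - ∑ S ∈ Finset.univ.powerset.filter (fun S => i ∈ S),
                    wbar ω p S i / wbarSum ω p S * unanimityCoeff v S))),
      if_pos (Finset.mem_univ i)]
    have hfin : (∑ a : β, wbar ω p Finset.univ a / wbarSum ω p Finset.univ *
          (wShapley ω p v Finset.univ i -
            ∑ S ∈ Finset.univ.powerset.filter (fun S => a ∈ S),
              wbar ω p S i / wbarSum ω p S * unanimityCoeff v S))
        = wShapley ω p v Finset.univ i
          - wbar ω p Finset.univ i / wbarSum ω p Finset.univ *
              (v Finset.univ - v (Finset.univ.erase i)) := by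
      have h4 : ∀ a : β, wbar ω p Finset.univ a / wbarSum ω p Finset.univ *
            (wShapley ω p v Finset.univ i -
              ∑ S ∈ Finset.univ.powerset.filter (fun S => a ∈ S),
                wbar ω p S i / wbarSum ω p S * unanimityCoeff v S)
          = (wbar ω p Finset.univ a * wShapley ω p v Finset.univ i
              - wbar ω p Finset.univ a *
                  ∑ S ∈ Finset.univ.powerset.filter (fun S => a ∈ S),
                    wbar ω p S i / wbarSum ω p S * unanimityCoeff v S)
              / wbarSum ω p Finset.univ := by
        intro a; ring
      rw [Finset.sum_congr rfl fun a _ => h4 a, ← Finset.sum_div,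
        Finset.sum_sub_distrib, ← Finset.sum_mul, hB,
        show (∑ a : β, wbar ω p Finset.univ a) = wbarSum ω p (Finset.univ : Finset β)
          from rfl]
      field_simp
    rw [hfin, ← hC]
    ring

end Key

/-- The expectation under `P_{ω,Σ}` of the marginal contribution
`v({j : σ j ≥ σ i}) − v({j : σ j > σ i})` equals the `(ω,Σ)`-weighted Shapley value `Φ^ω_i(v)`. -/
theorem expectation_orderProb_eq_weighted_shapley [Fintype α] [DecidableEq α]
    (ω : α → ℝ) (hω : ∀ i, 0 < ω i) (p : α → ℕ) (hp : ∀ i, 1 ≤ p i)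
    (v : Finset α → ℝ) (hv : v ∅ = 0) (i : α) :
    (∑ σ : α ≃ Fin (Fintype.card α),
        orderProb ω p σ *
          (v (Finset.univ.filter fun j => σ i ≤ σ j) -
            v (Finset.univ.filter fun j => σ i < σ j)))
      = wShapley ω p v Finset.univ i := by
  have h : ∀ σ : α ≃ Fin (Fintype.card α), orderProb ω p σ = oprob ω p σ := fun _ => rfl
  rw [Finset.sum_congr rfl fun σ _ => by rw [h σ]]
  exact key_main (Fintype.card α) α rfl ω hω p v hv i

end
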